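/- arXiv:0910.5394 — 3 statements merged into one kernel-verified Lean document; each statement's English description precedes it below -/
import Mathlib

section
/- Let D = ⋂_{i=1}^p D_i ⊆ ℝ^m with each D_i closed, and let x ∈ ∂D. Suppose that for each i with x ∈ ∂D_i there is a unit vector n_i(x) and a constant α_i > 0 such that (y − x)·n_i(x) + |y − x|²/(2α_i) ≥ 0 for every y ∈ D_i (exterior sphere restricted at x). Let β₀ > 0, let c_i ≥ 0 (for i with x ∈ ∂D_i) satisfy Σ c_i ≤ 1/β₀, and suppose that n := Σ_{i: x∈∂D_i} c_i n_i(x) is a unit vector. Then n ∈ N^D_{x,α} with α = β₀ · min_{i: x∈∂D_i} α_i, i.e. (y − x)·n + |y − x|²/(2α) ≥ 0 for every y ∈ D. -/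
open scoped RealInnerProductSpace

/-- The set of inward unit normal vectors to `D` at `x` with constant `α`:
unit vectors `n` such that the open ball of radius `α` centered at `x − αn` misses `D`. -/
def normalSet {m : ℕ} (D : Set (EuclideanSpace ℝ (Fin m))) (x : EuclideanSpace ℝ (Fin m))
    (α : ℝ) : Set (EuclideanSpace ℝ (Fin m)) :=
  {v | ‖v‖ = 1 ∧ Metric.ball (x - α • v) α ∩ D = ∅}

/-- Let `D = ⋂ᵢ Dᵢ ⊆ ℝ^m` with each `Dᵢ` closed and `x ∈ ∂D`. If for each `i`
with `x ∈ ∂Dᵢ` there are a unit vector `nᵢ(x)` and `αᵢ > 0` with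
`(y−x)·nᵢ(x) + |y−x|²/(2αᵢ) ≥ 0` for all `y ∈ Dᵢ`, and if `cᵢ ≥ 0` (supported on the active
indices) satisfy `Σ cᵢ ≤ 1/β₀` and `n = Σ cᵢ nᵢ(x)` is a unit vector, then
`n ∈ N^D_{x,α}` with `α = β₀ · min·{αᵢ : x ∈ ∂Dᵢ}`. -/
theorem stmt_4 {m p : ℕ} (hm : 2 ≤ m)
    (D : Fin p → Set (EuclideanSpace ℝ (Fin m))) (hD : ∀ i, IsClosed (D i))
    (x : EuclideanSpace ℝ (Fin m)) (hx : x ∈ frontier (⋂ i, D i))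
    (nv : Fin p → EuclideanSpace ℝ (Fin m)) (α : Fin p → ℝ)
    (hα : ∀ i, x ∈ frontier (D i) → 0 < α i)
    (hunit : ∀ i, x ∈ frontier (D i) → ‖nv i‖ = 1)
    (hsphere : ∀ i, x ∈ frontier (D i) →
      ∀ y ∈ D i, ⟪y - x, nv i⟫ + ‖y - x‖ ^ 2 / (2 * α i) ≥ 0)
    (β₀ : ℝ) (hβ₀ : 0 < β₀)
    (c : Fin p → ℝ) (hc : ∀ i, x ∈ frontier (D i) → 0 ≤ c i)
    (hcsupp : ∀ i, x ∉ frontier (D i) → c i = 0)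
    (hcsum : ∑ i, c i ≤ 1 / β₀)
    (hn : ‖∑ i, c i • nv i‖ = 1) :
    (∑ i, c i • nv i) ∈
      normalSet (⋂ i, D i) x (β₀ * sInf {a : ℝ | ∃ i, x ∈ frontier (D i) ∧ a = α i}) := by
  classical
  set S := {a : ℝ | ∃ i, x ∈ frontier (D i) ∧ a = α i} with hSdef
  set nvec := ∑ i, c i • nv i with hnvecdef
  have hSfin : S.Finite := (Set.finite_range α).subset (by rintro a ⟨i, _, rfl⟩; exact ⟨i, rfl⟩)
  have hxD : ∀ i, x ∈ D i := by
    have hx' : x ∈ ⋂ i, D i := by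
      have h1 := frontier_subset_closure hx
      rwa [(isClosed_iInter hD).closure_eq] at h1
    exact fun i => Set.mem_iInter.mp hx' i
  have hSne : S.Nonempty := by
    by_contra h
    have hint : ∀ i, x ∈ interior (D i) := by
      intro i
      by_contra hxi
      exact h ⟨α i, i, ⟨subset_closure (hxD i), hxi⟩, rfl⟩
    have : x ∈ interior (⋂ i, D i) := by
      rw [interior_iInter_of_finite]
      exact Set.mem_iInter.mpr hint
    exact hx.2 this
  obtain ⟨i₀, hi₀, hmin⟩ := hSne.csInf_mem hSfin
  have hminpos : 0 < sInf S := hmin ▸ hα i₀ hi₀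
  have hle : ∀ i, x ∈ frontier (D i) → sInf S ≤ α i := fun i hi =>
    csInf_le hSfin.bddBelow ⟨i, hi, rfl⟩
  set a : ℝ := β₀ * sInf S with hadef
  have hapos : 0 < a := mul_pos hβ₀ hminpos
  have hkey : ∀ y ∈ ⋂ i, D i, ⟪y - x, nvec⟫ + ‖y - x‖ ^ 2 / (2 * a) ≥ 0 := by
    intro y hy
    have hyD : ∀ i, y ∈ D i := fun i => Set.mem_iInter.mp hy i
    have hinner : ⟪y - x, nvec⟫ = ∑ i, c i * ⟪y - x, nv i⟫ := by
      rw [hnvecdef, inner_sum]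
      exact Finset.sum_congr rfl fun i _ => real_inner_smul_right _ _ _
    have hbound : ∀ i, c i * ⟪y - x, nv i⟫ ≥ -(c i * (‖y - x‖ ^ 2 / (2 * sInf S))) := by
      intro i
      by_cases hi : x ∈ frontier (D i)
      · have h1 := hsphere i hi y (hyD i)
        have hci := hc i hi
        have h2 : ⟪y - x, nv i⟫ ≥ -(‖y - x‖ ^ 2 / (2 * α i)) := by linarith
        have h3 : ‖y - x‖ ^ 2 / (2 * α i) ≤ ‖y - x‖ ^ 2 / (2 * sInf S) := by
          apply div_le_div_of_nonneg_left (by positivity) (by positivity)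
          nlinarith [hle i hi]
        nlinarith [mul_le_mul_of_nonneg_left h3 hci, mul_le_mul_of_nonneg_left h2 hci]
      · simp [hcsupp i hi]
    have hsum : ⟪y - x, nvec⟫ ≥ -((∑ i, c i) * (‖y - x‖ ^ 2 / (2 * sInf S))) := by
      rw [hinner, Finset.sum_mul, ← Finset.sum_neg_distrib]
      exact Finset.sum_le_sum fun i _ => hbound i
    have hfac : (∑ i, c i) * (‖y - x‖ ^ 2 / (2 * sInf S)) ≤
        (1 / β₀) * (‖y - x‖ ^ 2 / (2 * sInf S)) :=
      mul_le_mul_of_nonneg_right hcsum (by positivity)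
    have heq : (1 / β₀) * (‖y - x‖ ^ 2 / (2 * sInf S)) = ‖y - x‖ ^ 2 / (2 * a) := by
      rw [hadef, div_mul_div_comm, one_mul, mul_left_comm]
    linarith [hsum, hfac, heq ▸ hfac]
  refine ⟨hn, ?_⟩
  rw [Set.eq_empty_iff_forall_notMem]
  rintro y ⟨hyb, hyD⟩
  have hdist : ‖(y - x) + a • nvec‖ < a := by
    have := Metric.mem_ball.mp hyb
    rw [dist_eq_norm] at this
    have heq : y - (x - a • nvec) = (y - x) + a • nvec := by abel
    rwa [heq] at this
  have hsq : ‖(y - x) + a • nvec‖ ^ 2 < a ^ 2 := by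
    have h0 : (0:ℝ) ≤ ‖(y - x) + a • nvec‖ := norm_nonneg _
    nlinarith
  have hexp : ‖(y - x) + a • nvec‖ ^ 2
      = ‖y - x‖ ^ 2 + 2 * (a * ⟪y - x, nvec⟫) + a ^ 2 := by
    rw [@norm_add_sq_real, real_inner_smul_right, norm_smul, Real.norm_eq_abs,
      abs_of_pos hapos, hn, mul_one]
  have hneg : ⟪y - x, nvec⟫ + ‖y - x‖ ^ 2 / (2 * a) < 0 := by
    rw [hexp] at hsq
    have h2a : 0 < 2 * a := by linarith
    have h1 : ‖y - x‖ ^ 2 + 2 * a * ⟪y - x, nvec⟫ < 0 := by nlinarith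
    have h2 : ⟪y - x, nvec⟫ + ‖y - x‖ ^ 2 / (2 * a) =
        (‖y - x‖ ^ 2 + 2 * a * ⟪y - x, nvec⟫) / (2 * a) := by
      rw [add_div, mul_comm (2 * a), mul_div_assoc, div_self (ne_of_gt h2a), mul_one, add_comm]
    rw [h2]
    exact div_neg_of_neg_of_pos h1 h2a
  linarith [hkey y hyD, hneg]
end

section
/- (Inheritance criterion, normal cone characterization.) Under hypotheses (i)–(iv) on D = ⋂_{i=1}^p D_i, for every x ∈ ∂D the set of inward unit normal vectors satisfies N^D_x = { n ∈ ℝ^m : |n| = 1 and n = Σ_{i: x ∈ ∂D_i} c_i n_i(x) for some coefficients c_i ≥ 0 }. -/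
open scoped RealInnerProductSpace

section AuxLemmas

variable {E : Type*} [NormedAddCommGroup E] [InnerProductSpace ℝ E]

lemma auxDiv {Z L : ℝ} (hL : 0 < L) : -Z / (2 * L) * L = -Z / 2 := by
  field_simp

lemma auxDiv2 {q b A : ℝ} (hb : b ≠ 0) (hA : A ≠ 0) :
    (1/b) * (q / (2*A)) = q / (2 * (b * A)) := by
  field_simp

lemma auxSphereOut {x v y : E} {a : ℝ} (ha : 0 < a) (hv : ‖v‖ = 1)
    (h : y ∉ Metric.ball (x - a • v) a) : -(‖y - x‖ ^ 2 / (2 * a)) ≤ ⟪y - x, v⟫ := by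
  rw [Metric.mem_ball, dist_eq_norm, show y - (x - a • v) = (y - x) + a • v by abel] at h
  push_neg at h
  have e := norm_add_sq_real (y - x) (a • v)
  rw [real_inner_smul_right] at e
  have hav : ‖a • v‖ = a := by
    rw [norm_smul, hv, mul_one, Real.norm_eq_abs, abs_of_pos ha]
  have h2 : a ^ 2 ≤ ‖(y - x) + a • v‖ ^ 2 := by
    apply pow_le_pow_left₀ ha.le h
  rw [e, hav] at h2
  rw [neg_le, ← sub_nonneg]
  have key : 0 ≤ ‖y - x‖ ^ 2 + 2 * (a * ⟪y - x, v⟫) := by linarith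
  have : ‖y - x‖ ^ 2 / (2 * a) + ⟪y - x, v⟫ = (‖y - x‖ ^ 2 + 2 * (a * ⟪y - x, v⟫)) / (2*a) := by
    field_simp
  rw [← neg_neg (⟪y - x, v⟫), sub_neg_eq_add] at *
  rw [this]
  positivity

lemma auxSphereIn {x v y : E} {a : ℝ} (ha : 0 < a) (hv : ‖v‖ = 1)
    (h : -(‖y - x‖ ^ 2 / (2 * a)) ≤ ⟪y - x, v⟫) : y ∉ Metric.ball (x - a • v) a := by
  intro hy
  rw [Metric.mem_ball, dist_eq_norm, show y - (x - a • v) = (y - x) + a • v by abel] at hy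
  have e := norm_add_sq_real (y - x) (a • v)
  rw [real_inner_smul_right] at e
  have hav : ‖a • v‖ = a := by
    rw [norm_smul, hv, mul_one, Real.norm_eq_abs, abs_of_pos ha]
  have h2 : ‖(y - x) + a • v‖ ^ 2 < a ^ 2 := by
    apply pow_lt_pow_left₀ hy (norm_nonneg _)
    norm_num
  rw [e, hav] at h2
  have h3 : -(‖y - x‖ ^ 2 / (2 * a)) * (2*a) ≤ ⟪y - x, v⟫ * (2*a) := by
    apply mul_le_mul_of_nonneg_right h (by positivity)
  have : -(‖y - x‖ ^ 2 / (2 * a)) * (2*a) = -‖y - x‖^2 := by field_simp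
  nlinarith

variable [CompleteSpace E]

lemma auxFarkas {p : ℕ} (w : Fin p → E) (l : E) (hl : ‖l‖ ≤ 1) (b : ℝ) (hb : 0 < b)
    (hw : ∀ i, w i = 0 ∨ b ≤ ⟪l, w i⟫) (v : E)
    (hv : ∀ z : E, (∀ i, 0 ≤ ⟪w i, z⟫) → 0 ≤ ⟪z, v⟫) :
    ∃ c : Fin p → ℝ, (∀ i, 0 ≤ c i) ∧ (∀ i, w i = 0 → c i = 0) ∧ v = ∑ i, c i • w i := by
  classical
  set S : Set E := {u | ∃ c : Fin p → ℝ, (∀ i, 0 ≤ c i) ∧ u = ∑ i, c i • w i} with hS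
  set K : ConvexCone ℝ E :=
    { carrier := S
      smul_mem' := by
        rintro t ht u ⟨c, hc, rfl⟩
        exact ⟨fun i => t * c i, fun i => mul_nonneg ht.le (hc i), by
          simp [Finset.smul_sum, smul_smul]⟩
      add_mem' := by
        rintro u ⟨c, hc, rfl⟩ u' ⟨c', hc', rfl⟩
        exact ⟨fun i => c i + c' i, fun i => add_nonneg (hc i) (hc' i), by
          simp [add_smul, Finset.sum_add_distrib]⟩ } with hK
  have hzeroS : (0 : E) ∈ S := ⟨0, fun i => le_refl 0, by simp⟩
  have hmemw : ∀ i, w i ∈ S := by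
    intro i
    refine ⟨fun j => if j = i then 1 else 0, fun j => by positivity, ?_⟩
    simp [ite_smul]
  have hnorm : ∀ u ∈ S, ∃ c : Fin p → ℝ, (∀ i, 0 ≤ c i) ∧ (∀ i, w i = 0 → c i = 0) ∧
      (∀ i, w i ≠ 0 → b * c i ≤ ‖u‖) ∧ u = ∑ i, c i • w i := by
    rintro u ⟨c, hc, rfl⟩
    set c' : Fin p → ℝ := fun i => if w i = 0 then 0 else c i with hc'
    have hsum : ∑ i, c i • w i = ∑ i, c' i • w i := by
      refine Finset.sum_congr rfl fun i _ => ?_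
      by_cases h : w i = 0 <;> simp [hc', h]
    refine ⟨c', fun i => by by_cases h : w i = 0 <;> simp [hc', h, hc i], fun i h => by simp [hc', h],
      ?_, hsum⟩
    intro i hi
    have hterm : ∀ j, 0 ≤ c' j * ⟪l, w j⟫ := by
      intro j
      by_cases h : w j = 0
      · simp [hc', h]
      · rcases hw j with h' | h'
        · exact absurd h' h
        · exact mul_nonneg (by by_cases hh : w j = 0 <;> simp [hc', hh, hc j]) (hb.le.trans h')
    have hib : b * c' i ≤ c' i * ⟪l, w i⟫ := by
      rcases hw i with h' | h'
      · exact absurd h' hi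
      · have : 0 ≤ c' i := by simp [hc', hi, hc i]
        nlinarith
    have hsle : c' i * ⟪l, w i⟫ ≤ ∑ j, c' j * ⟪l, w j⟫ :=
      Finset.single_le_sum (fun j _ => hterm j) (Finset.mem_univ i)
    have hinner : ∑ j, c' j * ⟪l, w j⟫ = ⟪l, ∑ j, c j • w j⟫ := by
      rw [hsum, inner_sum]
      exact (Finset.sum_congr rfl fun j _ => by rw [real_inner_smul_right]).symm
    have hle : ⟪l, ∑ j, c j • w j⟫ ≤ ‖∑ j, c j • w j‖ := by
      calc ⟪l, ∑ j, c j • w j⟫ ≤ ‖l‖ * ‖∑ j, c j • w j‖ := real_inner_le_norm _ _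
        _ ≤ 1 * ‖∑ j, c j • w j‖ := by
            exact mul_le_mul_of_nonneg_right hl (norm_nonneg _)
        _ = _ := one_mul _
    linarith
  have hclosed : IsClosed S := by
    rw [← closure_subset_iff_isClosed]
    intro u hu
    set R : ℝ := ‖u‖ + 1 with hR
    set T : Set (Fin p → ℝ) :=
      Set.pi Set.univ (fun i => if w i = 0 then {0} else Set.Icc 0 (R / b)) with hT
    have hTcomp : IsCompact T := by
      apply isCompact_univ_pi
      intro i
      by_cases h : w i = 0 <;> simp [h, isCompact_Icc, isCompact_singleton]
    set Φ : (Fin p → ℝ) → E := fun c => ∑ i, c i • w i with hΦ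
    have hΦcont : Continuous Φ := by
      apply continuous_finset_sum
      intro i _
      exact (continuous_apply i).smul continuous_const
    have hcomp : IsCompact (Φ '' T) := hTcomp.image hΦcont
    have hsub : S ∩ Metric.ball 0 R ⊆ Φ '' T := by
      rintro z ⟨hzS, hzball⟩
      obtain ⟨c, hc0, hcz, hcb, rfl⟩ := hnorm z hzS
      refine ⟨c, ?_, rfl⟩
      intro i _
      by_cases h : w i = 0
      · simp [h, hcz i h]
      · simp only [h, if_false]
        refine ⟨hc0 i, ?_⟩
        rw [le_div_iff₀ hb]
        have h1 := hcb i h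
        have h2 : ‖∑ j, c j • w j‖ ≤ R := by
          have := mem_ball_zero_iff.mp hzball
          linarith
        calc c i * b = b * c i := mul_comm _ _
          _ ≤ ‖∑ j, c j • w j‖ := h1
          _ ≤ R := h2
    have hPhiT_sub : Φ '' T ⊆ S := by
      rintro z ⟨c, hcT, rfl⟩
      refine ⟨c, fun i => ?_, rfl⟩
      have := hcT i (Set.mem_univ i)
      by_cases h : w i = 0
      · have h0 : c i = 0 := by simpa [h] using this
        simp [h0]
      · simp only [h, if_false] at this
        exact this.1
    have hu2 : u ∈ closure (S ∩ Metric.ball 0 R) := by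
      rw [mem_closure_iff] at hu ⊢
      intro O hO hxO
      obtain ⟨z, hz⟩ := hu (O ∩ Metric.ball 0 R) (hO.inter Metric.isOpen_ball)
        ⟨hxO, by simp [hR]⟩
      exact ⟨z, ⟨hz.1.1, hz.2, hz.1.2⟩⟩
    have := closure_mono hsub hu2
    rw [hcomp.isClosed.closure_eq] at this
    exact hPhiT_sub this
  have hvS : v ∈ S := by
    by_contra hvn
    let C : ProperCone ℝ E :=
      { carrier := S
        add_mem' := fun {a b} ha hb => K.add_mem' ha hb
        zero_mem' := hzeroS
        smul_mem' := by
          rintro c u ⟨d, hd, rfl⟩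
          exact ⟨fun i => (c : ℝ) * d i, fun i => mul_nonneg c.2 (hd i), by
            rw [Finset.smul_sum]
            exact Finset.sum_congr rfl fun i _ => by rw [mul_smul]; rfl⟩
        isClosed' := hclosed }
    obtain ⟨z, hz, hzv⟩ := C.hyperplane_separation' (x₀ := v) (by exact hvn)
    have := hv z (fun i => hz (w i) (hmemw i))
    rw [real_inner_comm] at this
    linarith
  obtain ⟨c, hc0, rfl⟩ := hvS
  obtain ⟨c', h1, h2, _, h4⟩ := hnorm _ ⟨c, hc0, rfl⟩
  exact ⟨c', h1, h2, h4⟩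

end AuxLemmas

/-- The set `N^D_x = ⋃_{α>0} N^D_{x,α}` of inward unit normal vectors to `D` at `x`. -/
def normalCone {m : ℕ} (D : Set (EuclideanSpace ℝ (Fin m))) (x : EuclideanSpace ℝ (Fin m)) :
    Set (EuclideanSpace ℝ (Fin m)) :=
  ⋃ α ∈ Set.Ioi (0 : ℝ), normalSet D x α

/-- `D` satisfies the Uniform Exterior Sphere property with constant `α`. -/
def UES {m : ℕ} (D : Set (EuclideanSpace ℝ (Fin m))) (α : ℝ) : Prop :=
  ∀ x ∈ frontier D, normalCone D x = normalSet D x α ∧ (normalSet D x α).Nonempty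

/-- `D` satisfies the Uniform Normal Cone property with constants `β`, `δ`. -/
def UNC {m : ℕ} (D : Set (EuclideanSpace ℝ (Fin m))) (β δ : ℝ) : Prop :=
  ∀ x ∈ frontier D, ∃ l : EuclideanSpace ℝ (Fin m), ‖l‖ = 1 ∧
    ∀ y ∈ frontier D, ‖y - x‖ ≤ δ → ∀ v ∈ normalCone D y, ⟪v, l⟫ ≥ Real.sqrt (1 - β ^ 2)

set_option maxHeartbeats 2000000 in
/-- Inheritance criterion, normal cone characterization. Under hypotheses
(i)–(iv) on `D = ⋂ᵢ Dᵢ`, for every `x ∈ ∂D` the inward unit normal vectors at `x` are exactly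
the unit vectors which are nonnegative linear combinations of the active `nᵢ(x)`. -/
theorem stmt_5 {m p : ℕ} (hm : 2 ≤ m) (hp : 0 < p)
    (D : Fin p → Set (EuclideanSpace ℝ (Fin m)))
    -- each `Dᵢ` is the closure of a nonempty open set
    (hDcl : ∀ i, ∃ U : Set (EuclideanSpace ℝ (Fin m)), IsOpen U ∧ U.Nonempty ∧ D i = closure U)
    (nv : Fin p → EuclideanSpace ℝ (Fin m) → EuclideanSpace ℝ (Fin m))
    -- (i) distinguished unit normal vectors with the interior cone condition
    (hunit : ∀ i, ∀ x ∈ (⋂ j, D j) ∩ frontier (D i), ‖nv i x‖ = 1)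
    (hcone : ∀ i, ∀ x ∈ (⋂ j, D j) ∩ frontier (D i), ∀ ε > (0 : ℝ), ∃ δ > (0 : ℝ),
      ∀ z : EuclideanSpace ℝ (Fin m), ‖z‖ ≤ δ → ⟪z, nv i x⟫ ≥ ε * ‖z‖ → x + z ∈ D i)
    -- (ii) uniform exterior sphere restricted to `D`
    (α : Fin p → ℝ) (hα : ∀ i, 0 < α i)
    (hUESi : ∀ i, ∀ x ∈ (⋂ j, D j) ∩ frontier (D i),
      Metric.ball (x - α i • nv i x) (α i) ∩ D i = ∅)
    -- (iii) uniform normal cone restricted to `D`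
    (β : Fin p → ℝ) (hβ : ∀ i, β i ∈ Set.Ico (0 : ℝ) 1)
    (δ : Fin p → ℝ) (hδ : ∀ i, 0 < δ i)
    (hUNCi : ∀ i, ∀ x ∈ (⋂ j, D j) ∩ frontier (D i), ∃ l : EuclideanSpace ℝ (Fin m), ‖l‖ = 1 ∧
      ∀ y ∈ (⋂ j, D j) ∩ frontier (D i), ‖y - x‖ ≤ δ i →
        ⟪nv i y, l⟫ ≥ Real.sqrt (1 - β i ^ 2))
    -- (iv) compatibility
    (β₀ : ℝ) (hβ₀ : β₀ > Real.sqrt (2 * sSup (Set.range β)))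
    (hcompat : ∀ x ∈ frontier (⋂ j, D j), ∃ l : EuclideanSpace ℝ (Fin m), ‖l‖ = 1 ∧
      ∀ i, x ∈ frontier (D i) → ⟪l, nv i x⟫ ≥ β₀) :
    ∀ x ∈ frontier (⋂ j, D j),
      normalCone (⋂ j, D j) x =
        {v | ‖v‖ = 1 ∧ ∃ c : Fin p → ℝ, (∀ i, 0 ≤ c i) ∧
          (∀ i, x ∉ frontier (D i) → c i = 0) ∧ v = ∑ i, c i • nv i x} := by
  classical
  intro x hx
  have hne : (Finset.univ : Finset (Fin p)).Nonempty := by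
    have : Nonempty (Fin p) := ⟨⟨0, hp⟩⟩
    exact Finset.univ_nonempty
  have hDiclosed : ∀ i, IsClosed (D i) := by
    intro i; obtain ⟨U, _, _, hEq⟩ := hDcl i; rw [hEq]; exact isClosed_closure
  have hDclosed : IsClosed (⋂ j, D j) := isClosed_iInter fun i => hDiclosed i
  have hxD : x ∈ ⋂ j, D j := by
    have h1 : x ∈ closure (⋂ j, D j) := frontier_subset_closure hx
    rwa [hDclosed.closure_eq] at h1
  have hβ₀pos : 0 < β₀ := lt_of_le_of_lt (Real.sqrt_nonneg _) hβ₀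
  have hxnotint : x ∉ interior (⋂ j, D j) := by
    rw [hDclosed.frontier_eq] at hx; exact hx.2
  have hint : ∀ i, x ∉ frontier (D i) → x ∈ interior (D i) := by
    intro i hi
    have hxDi : x ∈ D i := Set.mem_iInter.mp hxD i
    rw [(hDiclosed i).frontier_eq] at hi
    by_contra h
    exact hi ⟨hxDi, h⟩
  have hactive : ∃ i, x ∈ frontier (D i) := by
    by_contra h
    push_neg at h
    apply hxnotint
    apply interior_maximal (Set.iInter_mono fun i => interior_subset)
      (isOpen_iInter_of_finite fun i => isOpen_interior)
    exact Set.mem_iInter.mpr fun i => hint i (h i)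
  obtain ⟨i₀, hi₀⟩ := hactive
  obtain ⟨l, hl, hli⟩ := hcompat x hx
  set w : Fin p → EuclideanSpace ℝ (Fin m) :=
    fun i => if x ∈ frontier (D i) then nv i x else 0 with hw
  ext v
  simp only [Set.mem_setOf_eq]
  constructor
  · rintro hv
    rw [normalCone, Set.mem_iUnion₂] at hv
    obtain ⟨a, haI, hv1, hv2⟩ := hv
    have ha : (0 : ℝ) < a := haI
    refine ⟨hv1, ?_⟩
    have hwl : ∀ i, w i = 0 ∨ β₀ ≤ ⟪l, w i⟫ := by
      intro i
      by_cases h : x ∈ frontier (D i)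
      · right; simp only [hw, if_pos h]; exact hli i h
      · left; simp only [hw, if_neg h]
    have hdual : ∀ z : EuclideanSpace ℝ (Fin m), (∀ i, 0 ≤ ⟪w i, z⟫) → 0 ≤ ⟪z, v⟫ := by
      intro z hz
      have hstep : ∀ s : ℝ, 0 < s → 0 ≤ ⟪z + s • l, v⟫ := by
        intro s hs
        set zs := z + s • l with hzsdef
        have hzsi : ∀ i, x ∈ frontier (D i) → s * β₀ ≤ ⟪zs, nv i x⟫ := by
          intro i hi
          have h1 : 0 ≤ ⟪nv i x, z⟫ := by
            have h0 := hz i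
            simp only [hw] at h0
            rwa [if_pos hi] at h0
          rw [real_inner_comm] at h1
          have h2 : β₀ ≤ ⟪l, nv i x⟫ := hli i hi
          rw [hzsdef, inner_add_left, real_inner_smul_left]
          nlinarith
        have hzs0 : zs ≠ 0 := by
          intro h0
          have := hzsi i₀ hi₀
          rw [h0, inner_zero_left] at this
          nlinarith [mul_pos hs hβ₀pos]
        have hzsn : 0 < ‖zs‖ := norm_pos_iff.mpr hzs0
        have hd : ∀ i : Fin p, ∃ d : ℝ, 0 < d ∧ ∀ t : ℝ, 0 < t → t ≤ d → x + t • zs ∈ D i := by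
          intro i
          by_cases hi : x ∈ frontier (D i)
          · obtain ⟨d, hd0, hP⟩ := hcone i x ⟨hxD, hi⟩ (s * β₀ / ‖zs‖) (by positivity)
            refine ⟨d / ‖zs‖, by positivity, fun t ht htd => ?_⟩
            have hn : ‖t • zs‖ = t * ‖zs‖ := by
              rw [norm_smul, Real.norm_eq_abs, abs_of_pos ht]
            apply hP (t • zs)
            · rw [hn]
              exact (le_div_iff₀ hzsn).mp htd
            · rw [real_inner_smul_left, hn]
              have h3 := hzsi i hi
              have he : s * β₀ / ‖zs‖ * (t * ‖zs‖) = t * (s * β₀) := by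
                field_simp
              rw [he]
              exact mul_le_mul_of_nonneg_left h3 ht.le
          · have hmem := hint i hi
            obtain ⟨r, hr0, hball⟩ := Metric.isOpen_iff.mp isOpen_interior x hmem
            refine ⟨r / (2 * ‖zs‖), by positivity, fun t ht htd => ?_⟩
            apply interior_subset (s := D i)
            apply hball
            rw [Metric.mem_ball, dist_eq_norm, add_sub_cancel_left, norm_smul,
              Real.norm_eq_abs, abs_of_pos ht]
            have h4 : t * (2 * ‖zs‖) ≤ r := (le_div_iff₀ (by positivity)).mp htd
            nlinarith
        choose d hd0 hdP using hd
        set d₀ := Finset.univ.inf' hne d with hd₀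
        have hd₀0 : 0 < d₀ := by
          rw [hd₀, Finset.lt_inf'_iff]
          exact fun i _ => hd0 i
        have hkey : ∀ t : ℝ, 0 < t → t ≤ d₀ → -(t * ‖zs‖^2 / (2*a)) ≤ ⟪zs, v⟫ := by
          intro t ht htd
          have hmemD : x + t • zs ∈ ⋂ j, D j :=
            Set.mem_iInter.mpr fun i =>
              hdP i t ht (htd.trans (Finset.inf'_le d (Finset.mem_univ i)))
          have hnb : x + t • zs ∉ Metric.ball (x - a • v) a := by
            intro hb
            rw [Set.eq_empty_iff_forall_notMem] at hv2
            exact hv2 _ ⟨hb, hmemD⟩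
          have h5 := auxSphereOut ha hv1 hnb
          rw [add_sub_cancel_left, real_inner_smul_left, norm_smul,
            Real.norm_eq_abs, abs_of_pos ht] at h5
          have h2a : (0:ℝ) < 2*a := by positivity
          rw [show -((t * ‖zs‖)^2 / (2*a)) = -((t * ‖zs‖)^2)/(2*a) by ring,
            div_le_iff₀ h2a] at h5
          rw [show -(t * ‖zs‖^2 / (2*a)) = -(t * ‖zs‖^2)/(2*a) by ring,
            div_le_iff₀ h2a]
          nlinarith [h5, ht]
        by_contra hneg
        push_neg at hneg
        set t := min d₀ (a * (-⟪zs, v⟫) / ‖zs‖^2) with htdef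
        have hnegpos : 0 < -⟪zs, v⟫ := neg_pos.mpr hneg
        have ht0 : 0 < t := lt_min hd₀0 (by positivity)
        have h1 := hkey t ht0 (min_le_left _ _)
        have h2 : t ≤ a * (-⟪zs, v⟫) / ‖zs‖^2 := min_le_right _ _
        have h2' : t * ‖zs‖^2 ≤ a * (-⟪zs, v⟫) := (le_div_iff₀ (by positivity)).mp h2
        have h1' : -(t * ‖zs‖^2) ≤ ⟪zs, v⟫ * (2*a) := by
          have := mul_le_mul_of_nonneg_right h1 (le_of_lt (by positivity : (0:ℝ) < 2*a))
          calc -(t * ‖zs‖^2) = -(t * ‖zs‖^2 / (2*a)) * (2*a) := by field_simp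
            _ ≤ ⟪zs, v⟫ * (2*a) := this
        nlinarith [mul_pos ha hnegpos, h1', h2']
      by_contra hneg
      push_neg at hneg
      have hL : ∀ s : ℝ, 0 < s → 0 ≤ ⟪z, v⟫ + s * ⟪l, v⟫ := by
        intro s hs
        have := hstep s hs
        rwa [inner_add_left, real_inner_smul_left] at this
      rcases le_or_gt ⟪l, v⟫ 0 with hL0 | hL0
      · have := hL 1 one_pos; nlinarith
      · have hs0 : 0 < -⟪z, v⟫ / (2 * ⟪l, v⟫) :=
          div_pos (neg_pos.mpr hneg) (by positivity)
        have := hL _ hs0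
        rw [auxDiv hL0] at this
        linarith
    obtain ⟨c, hc0, hcz, hsum⟩ := auxFarkas w l (le_of_eq hl) β₀ hβ₀pos hwl v hdual
    refine ⟨c, hc0, fun i hi => hcz i (by simp only [hw, if_neg hi]), ?_⟩
    rw [hsum]
    refine Finset.sum_congr rfl fun i _ => ?_
    by_cases h : x ∈ frontier (D i)
    · simp only [hw, if_pos h]
    · rw [hcz i (by simp only [hw, if_neg h])]
      simp
  · rintro ⟨hv1, c, hc0, hcz, hsum⟩
    set A := Finset.univ.inf' hne α with hA
    have hA0 : 0 < A := by
      rw [hA, Finset.lt_inf'_iff]; exact fun i _ => hα i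
    have hAle : ∀ i, A ≤ α i := fun i => Finset.inf'_le α (Finset.mem_univ i)
    have hcsum : β₀ * ∑ i, c i ≤ 1 := by
      have h1 : ∀ i, β₀ * c i ≤ c i * ⟪l, nv i x⟫ := by
        intro i
        by_cases h : x ∈ frontier (D i)
        · have := hli i h; nlinarith [hc0 i]
        · rw [hcz i h]; simp
      have h2 : ⟪l, v⟫ = ∑ i, c i * ⟪l, nv i x⟫ := by
        rw [hsum, inner_sum]
        exact Finset.sum_congr rfl fun i _ => real_inner_smul_right _ _ _
      have h3 : ⟪l, v⟫ ≤ 1 := by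
        calc ⟪l, v⟫ ≤ ‖l‖ * ‖v‖ := real_inner_le_norm _ _
          _ = 1 := by rw [hl, hv1, one_mul]
      calc β₀ * ∑ i, c i = ∑ i, β₀ * c i := Finset.mul_sum _ _ _
        _ ≤ ∑ i, c i * ⟪l, nv i x⟫ := Finset.sum_le_sum fun i _ => h1 i
        _ = ⟪l, v⟫ := h2.symm
        _ ≤ 1 := h3
    rw [normalCone, Set.mem_iUnion₂]
    refine ⟨β₀ * A, Set.mem_Ioi.mpr (by positivity), hv1, ?_⟩
    rw [Set.eq_empty_iff_forall_notMem]
    rintro y ⟨hyb, hyD⟩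
    have hq0 : (0:ℝ) ≤ ‖y - x‖^2 := sq_nonneg _
    have hterm : ∀ i, -(c i * (‖y - x‖^2 / (2*A))) ≤ c i * ⟪y - x, nv i x⟫ := by
      intro i
      by_cases h : x ∈ frontier (D i)
      · have hyDi : y ∈ D i := Set.mem_iInter.mp hyD i
        have hball := hUESi i x ⟨hxD, h⟩
        have hnb : y ∉ Metric.ball (x - α i • nv i x) (α i) := by
          intro hb
          rw [Set.eq_empty_iff_forall_notMem] at hball
          exact hball y ⟨hb, hyDi⟩
        have h1 := auxSphereOut (hα i) (hunit i x ⟨hxD, h⟩) hnb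
        have h2 : ‖y - x‖^2 / (2 * α i) ≤ ‖y - x‖^2 / (2 * A) :=
          div_le_div_of_nonneg_left hq0 (by positivity) (by linarith [hAle i])
        nlinarith [hc0 i, h1, h2]
      · rw [hcz i h]; simp
    have hsum2 : ⟪y - x, v⟫ = ∑ i, c i * ⟪y - x, nv i x⟫ := by
      rw [hsum, inner_sum]
      exact Finset.sum_congr rfl fun i _ => real_inner_smul_right _ _ _
    have h5 : -((∑ i, c i) * (‖y - x‖^2 / (2*A))) ≤ ⟪y - x, v⟫ := by
      rw [hsum2]
      have hs := Finset.sum_le_sum fun i (_ : i ∈ Finset.univ) => hterm i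
      have e : ∑ i, -(c i * (‖y - x‖^2 / (2*A))) = -((∑ i, c i) * (‖y - x‖^2 / (2*A))) := by
        rw [Finset.sum_mul, ← Finset.sum_neg_distrib]
      linarith [e ▸ hs]
    have hfin : -(‖y - x‖^2 / (2 * (β₀ * A))) ≤ ⟪y - x, v⟫ := by
      have hSig : ∑ i, c i ≤ 1 / β₀ := by
        rw [le_div_iff₀ hβ₀pos]; linarith
      have hr0 : (0:ℝ) ≤ ‖y - x‖^2 / (2*A) := by positivity
      have h6 : (∑ i, c i) * (‖y - x‖^2 / (2*A)) ≤ (1/β₀) * (‖y - x‖^2 / (2*A)) :=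
        mul_le_mul_of_nonneg_right hSig hr0
      have h7 : (1/β₀) * (‖y - x‖^2 / (2*A)) = ‖y - x‖^2 / (2 * (β₀ * A)) :=
        auxDiv2 (ne_of_gt hβ₀pos) (ne_of_gt hA0)
      linarith [h5]
    exact auxSphereIn (by positivity) hv1 hfin hyb
end

section
/- (Inheritance criterion, Uniform Exterior Sphere.) Under hypotheses (i)–(iv) on D = ⋂_{i=1}^p D_i, the set D satisfies the Uniform Exterior Sphere property UES(α) with constant α = β₀ · min_{1 ≤ i ≤ p} α_i, i.e. N^D_x = N^D_{x,α} ≠ ∅ for every x ∈ ∂D. -/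
open scoped RealInnerProductSpace

private lemma ball_empty_iff {m : ℕ} (S : Set (EuclideanSpace ℝ (Fin m)))
    (x v : EuclideanSpace ℝ (Fin m)) (r : ℝ) (hr : 0 < r) (hv : ‖v‖ = 1) :
    Metric.ball (x - r • v) r ∩ S = ∅ ↔
      ∀ y ∈ S, 0 ≤ ‖y - x‖ ^ 2 + 2 * r * ⟪y - x, v⟫ := by
  have hexp : ∀ y : EuclideanSpace ℝ (Fin m),
      ‖y - (x - r • v)‖ ^ 2 = ‖y - x‖ ^ 2 + 2 * r * ⟪y - x, v⟫ + r ^ 2 := by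
    intro y
    have h1 : y - (x - r • v) = (y - x) + r • v := by module
    rw [h1, norm_add_sq_real, real_inner_smul_right, norm_smul, Real.norm_eq_abs,
      abs_of_pos hr, hv]
    ring
  rw [Set.eq_empty_iff_forall_notMem]
  constructor
  · intro h y hy
    have h1 : y ∉ Metric.ball (x - r • v) r := fun hb => h y ⟨hb, hy⟩
    rw [Metric.mem_ball, dist_eq_norm, not_lt] at h1
    have h2 := hexp y
    nlinarith [norm_nonneg (y - (x - r • v)),
      mul_le_mul h1 h1 hr.le (le_trans hr.le h1)]
  · rintro h y ⟨hb, hy⟩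
    rw [Metric.mem_ball, dist_eq_norm] at hb
    have h2 := hexp y
    have h3 := h y hy
    nlinarith [norm_nonneg (y - (x - r • v)),
      mul_self_lt_mul_self (norm_nonneg (y - (x - r • v))) hb]

set_option maxHeartbeats 2000000 in
/-- Inheritance criterion, Uniform Exterior Sphere. Under hypotheses
(i)–(iv) on `D = ⋂ᵢ Dᵢ`, the set `D` satisfies `UES(α)` with `α = β₀ · minᵢ αᵢ`. -/
theorem stmt_6 {m p : ℕ} (hm : 2 ≤ m) (hp : 0 < p)
    (D : Fin p → Set (EuclideanSpace ℝ (Fin m)))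
    -- each `Dᵢ` is the closure of a nonempty open set
    (hDcl : ∀ i, ∃ U : Set (EuclideanSpace ℝ (Fin m)), IsOpen U ∧ U.Nonempty ∧ D i = closure U)
    (nv : Fin p → EuclideanSpace ℝ (Fin m) → EuclideanSpace ℝ (Fin m))
    -- (i) distinguished unit normal vectors with the interior cone condition
    (hunit : ∀ i, ∀ x ∈ (⋂ j, D j) ∩ frontier (D i), ‖nv i x‖ = 1)
    (hcone : ∀ i, ∀ x ∈ (⋂ j, D j) ∩ frontier (D i), ∀ ε > (0 : ℝ), ∃ δ > (0 : ℝ),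
      ∀ z : EuclideanSpace ℝ (Fin m), ‖z‖ ≤ δ → ⟪z, nv i x⟫ ≥ ε * ‖z‖ → x + z ∈ D i)
    -- (ii) uniform exterior sphere restricted to `D`
    (α : Fin p → ℝ) (hα : ∀ i, 0 < α i)
    (hUESi : ∀ i, ∀ x ∈ (⋂ j, D j) ∩ frontier (D i),
      Metric.ball (x - α i • nv i x) (α i) ∩ D i = ∅)
    -- (iii) uniform normal cone restricted to `D`
    (β : Fin p → ℝ) (hβ : ∀ i, β i ∈ Set.Ico (0 : ℝ) 1)
    (δ : Fin p → ℝ) (hδ : ∀ i, 0 < δ i)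
    (hUNCi : ∀ i, ∀ x ∈ (⋂ j, D j) ∩ frontier (D i), ∃ l : EuclideanSpace ℝ (Fin m), ‖l‖ = 1 ∧
      ∀ y ∈ (⋂ j, D j) ∩ frontier (D i), ‖y - x‖ ≤ δ i →
        ⟪nv i y, l⟫ ≥ Real.sqrt (1 - β i ^ 2))
    -- (iv) compatibility
    (β₀ : ℝ) (hβ₀ : β₀ > Real.sqrt (2 * sSup (Set.range β)))
    (hcompat : ∀ x ∈ frontier (⋂ j, D j), ∃ l : EuclideanSpace ℝ (Fin m), ‖l‖ = 1 ∧
      ∀ i, x ∈ frontier (D i) → ⟪l, nv i x⟫ ≥ β₀) :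
    UES (⋂ j, D j) (β₀ * sInf (Set.range α)) := by
  classical
  haveI hEp : Nonempty (Fin p) := ⟨⟨0, hp⟩⟩
  have hDicl : ∀ i, IsClosed (D i) := by
    intro i; obtain ⟨U, _, _, hU⟩ := hDcl i; rw [hU]; exact isClosed_closure
  have hDclosed : IsClosed (⋂ j, D j) := isClosed_iInter hDicl
  have hAfin : (Set.range α).Finite := Set.finite_range α
  have hAne : (Set.range α).Nonempty := Set.range_nonempty α
  have hAmem : sInf (Set.range α) ∈ Set.range α := hAne.csInf_mem hAfin
  have hS0 : 0 < sInf (Set.range α) := by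
    obtain ⟨imin, himin⟩ := hAmem
    rw [← himin]; exact hα imin
  have hSle : ∀ i, sInf (Set.range α) ≤ α i := fun i =>
    csInf_le hAfin.bddBelow ⟨i, rfl⟩
  have hβ₀pos : 0 < β₀ := lt_of_le_of_lt (Real.sqrt_nonneg _) hβ₀
  obtain ⟨S, hSdef⟩ : ∃ S, sInf (Set.range α) = S := ⟨_, rfl⟩
  rw [hSdef] at hAmem hS0 hSle ⊢
  obtain ⟨A, hAdef⟩ : ∃ A, β₀ * S = A := ⟨_, rfl⟩
  rw [hAdef]
  have hApos : 0 < A := hAdef ▸ mul_pos hβ₀pos hS0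
  intro x hx
  have hxD : x ∈ ⋂ j, D j := hDclosed.frontier_subset hx
  have hdicho : ∀ i, x ∈ frontier (D i) ∨ x ∈ interior (D i) := by
    intro i
    by_cases h : x ∈ interior (D i)
    · exact Or.inr h
    · left
      rw [(hDicl i).frontier_eq]
      exact ⟨Set.mem_iInter.1 hxD i, h⟩
  have hIne : ∃ i, x ∈ frontier (D i) := by
    by_contra h
    push_neg at h
    have hint : ∀ i, x ∈ interior (D i) := fun i => (hdicho i).resolve_left (h i)
    have hxint : x ∈ interior (⋂ j, D j) := by
      have hopen : IsOpen (⋂ j, interior (D j)) :=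
        isOpen_iInter_of_finite fun j => isOpen_interior
      exact interior_maximal (Set.iInter_mono fun j => interior_subset) hopen
        (Set.mem_iInter.2 hint)
    have hx2 : x ∉ interior (⋂ j, D j) := by
      rw [hDclosed.frontier_eq] at hx; exact hx.2
    exact hx2 hxint
  obtain ⟨i₁, hi₁⟩ := hIne
  obtain ⟨l, hl1, hlprop⟩ := hcompat x hx
  have hkey : ∀ i, x ∈ frontier (D i) → ∀ y ∈ D i,
      0 ≤ ‖y - x‖ ^ 2 + 2 * α i * ⟪y - x, nv i x⟫ := by
    intro i hfi
    exact (ball_empty_iff _ _ _ _ (hα i) (hunit i x ⟨hxD, hfi⟩)).1 (hUESi i x ⟨hxD, hfi⟩)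
  have hβ₀le1 : β₀ ≤ 1 := by
    have h1 := hlprop i₁ hi₁
    have h2 : ⟪l, nv i₁ x⟫ ≤ 1 := by
      calc ⟪l, nv i₁ x⟫ ≤ ‖l‖ * ‖nv i₁ x‖ := real_inner_le_norm _ _
        _ = 1 := by rw [hl1, hunit i₁ x ⟨hxD, hi₁⟩]; ring
    linarith
  have hAleα : ∀ i, A ≤ α i := by
    intro i
    calc A = β₀ * S := hAdef.symm
      _ ≤ 1 * S := mul_le_mul_of_nonneg_right hβ₀le1 hS0.le
      _ = S := one_mul _
      _ ≤ α i := hSle i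
  -- main uniformization step
  have hmain : ∀ v : EuclideanSpace ℝ (Fin m), ‖v‖ = 1 → ∀ r, 0 < r →
      Metric.ball (x - r • v) r ∩ (⋂ j, D j) = ∅ →
      Metric.ball (x - A • v) A ∩ (⋂ j, D j) = ∅ := by
    intro v hv r hr hball
    have Hr : ∀ y ∈ (⋂ j, D j), 0 ≤ ‖y - x‖ ^ 2 + 2 * r * ⟪y - x, v⟫ :=
      (ball_empty_iff _ _ _ _ hr hv).1 hball
    -- dual-cone property of v
    have hdual : ∀ z : EuclideanSpace ℝ (Fin m),
        (∀ i, x ∈ frontier (D i) → 0 < ⟪z, nv i x⟫) → 0 ≤ ⟪z, v⟫ := by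
      intro z hz
      have hzne : z ≠ 0 := by
        intro h0
        have h1 := hz i₁ hi₁
        rw [h0, inner_zero_left] at h1
        exact lt_irrefl 0 h1
      have hznorm : 0 < ‖z‖ := norm_pos_iff.2 hzne
      have hstep : ∀ i, ∃ ti, 0 < ti ∧ ∀ t : ℝ, 0 < t → t ≤ ti → x + t • z ∈ D i := by
        intro i
        rcases hdicho i with hfi | hii
        · obtain ⟨δi, hδipos, hδi⟩ := hcone i x ⟨hxD, hfi⟩ (⟪z, nv i x⟫ / ‖z‖)
            (div_pos (hz i hfi) hznorm)
          refine ⟨δi / ‖z‖, div_pos hδipos hznorm, fun t ht htle => ?_⟩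
          apply hδi (t • z)
          · rw [norm_smul, Real.norm_eq_abs, abs_of_pos ht]
            exact (le_div_iff₀ hznorm).1 htle
          · rw [real_inner_smul_left, norm_smul, Real.norm_eq_abs, abs_of_pos ht]
            have hqe : ⟪z, nv i x⟫ / ‖z‖ * (t * ‖z‖) = t * ⟪z, nv i x⟫ := by
              field_simp
            rw [hqe]
        · obtain ⟨ε, hεpos, hεsub⟩ := Metric.isOpen_iff.1 isOpen_interior x hii
          refine ⟨ε / (2 * ‖z‖), by positivity, fun t ht htle => ?_⟩
          apply interior_subset
          apply hεsub
          rw [Metric.mem_ball, dist_eq_norm]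
          have he : x + t • z - x = t • z := by module
          rw [he, norm_smul, Real.norm_eq_abs, abs_of_pos ht]
          calc t * ‖z‖ ≤ ε / (2 * ‖z‖) * ‖z‖ := mul_le_mul_of_nonneg_right htle hznorm.le
            _ = ε / 2 := by field_simp
            _ < ε := by linarith
      choose ti hti hmemt using hstep
      set t₀ := Finset.univ.inf' Finset.univ_nonempty ti with ht₀def
      have ht₀pos : 0 < t₀ := by
        rw [ht₀def, Finset.lt_inf'_iff]
        exact fun i _ => hti i
      have hmemD : ∀ t : ℝ, 0 < t → t ≤ t₀ → x + t • z ∈ ⋂ j, D j := by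
        intro t ht htle
        exact Set.mem_iInter.2 fun i =>
          hmemt i t ht (le_trans htle (Finset.inf'_le _ (Finset.mem_univ i)))
      by_contra hneg
      push_neg at hneg
      have hcpos : 0 < -⟪z, v⟫ := by linarith
      set t := min t₀ (r * -⟪z, v⟫ / ‖z‖ ^ 2) with htdef
      have htpos : 0 < t := lt_min ht₀pos (by positivity)
      have hyD := hmemD t htpos (min_le_left _ _)
      have hHr := Hr (x + t • z) hyD
      have heq : x + t • z - x = t • z := by module
      rw [heq, norm_smul, real_inner_smul_left, Real.norm_eq_abs, abs_of_pos htpos] at hHr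
      have htle2 : t ≤ r * -⟪z, v⟫ / ‖z‖ ^ 2 := min_le_right _ _
      have h1 : t * ‖z‖ ^ 2 ≤ r * -⟪z, v⟫ := by
        rw [← le_div_iff₀ (by positivity : (0:ℝ) < ‖z‖ ^ 2)]
        exact htle2
      nlinarith [mul_le_mul_of_nonneg_left h1 htpos.le,
        mul_pos (mul_pos hr htpos) hcpos]
    -- conclude with the quadratic estimate at x
    rw [ball_empty_iff _ _ _ _ hApos hv]
    intro y hy
    obtain ⟨w, hw⟩ : ∃ w, y - x = w := ⟨_, rfl⟩
    rw [hw]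
    have hwkey : ∀ i, x ∈ frontier (D i) → 0 ≤ ‖w‖ ^ 2 + 2 * α i * ⟪w, nv i x⟫ :=
      fun i hfi => hw ▸ hkey i hfi y (Set.mem_iInter.1 hy i)
    have hstep2 : ∀ s : ℝ, 0 < s → -(‖w‖ ^ 2 / (2 * A) + s) ≤ ⟪w, v⟫ := by
      intro s hs
      obtain ⟨cs, hcs⟩ : ∃ c, ‖w‖ ^ 2 / (2 * A) + s = c := ⟨_, rfl⟩
      rw [hcs]
      have hcspos : 0 < cs := by rw [← hcs]; positivity
      have hzi : ∀ i, x ∈ frontier (D i) → 0 < ⟪w + cs • l, nv i x⟫ := by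
        intro i hfi
        rw [inner_add_left, real_inner_smul_left]
        have h1 := hwkey i hfi
        have h2 := hlprop i hfi
        have hT : -(‖w‖ ^ 2 / (2 * α i)) ≤ ⟪w, nv i x⟫ := by
          rw [neg_le, le_div_iff₀ (by linarith [hα i] : (0:ℝ) < 2 * α i)]
          nlinarith [h1]
        have hdiv : ‖w‖ ^ 2 / (2 * α i) ≤ ‖w‖ ^ 2 / (2 * S) := by
          rw [div_le_div_iff₀ (by linarith [hα i] : (0:ℝ) < 2 * α i)
            (by linarith [hS0] : (0:ℝ) < 2 * S)]
          nlinarith [hSle i, sq_nonneg ‖w‖, hS0, hα i]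
        have hlb : cs * β₀ ≤ cs * ⟪l, nv i x⟫ :=
          mul_le_mul_of_nonneg_left h2 hcspos.le
        have hid2 : cs * β₀ = ‖w‖ ^ 2 / (2 * S) + s * β₀ := by
          rw [← hcs, ← hAdef]
          field_simp
        nlinarith [mul_pos hs hβ₀pos]
      have h0 := hdual (w + cs • l) hzi
      rw [inner_add_left, real_inner_smul_left] at h0
      have hlv : ⟪l, v⟫ ≤ 1 := by
        calc ⟪l, v⟫ ≤ ‖l‖ * ‖v‖ := real_inner_le_norm _ _
          _ = 1 := by rw [hl1, hv]; ring
      nlinarith [mul_le_mul_of_nonneg_left hlv hcspos.le]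
    have hfin : -(‖w‖ ^ 2 / (2 * A)) ≤ ⟪w, v⟫ := by
      by_contra hcon
      push_neg at hcon
      have hs' := hstep2 ((-(‖w‖ ^ 2 / (2 * A)) - ⟪w, v⟫) / 2) (by linarith)
      linarith
    have hid : 2 * A * (‖w‖ ^ 2 / (2 * A)) = ‖w‖ ^ 2 := by field_simp
    nlinarith [mul_le_mul_of_nonneg_left hfin (by positivity : (0:ℝ) ≤ 2 * A)]
  constructor
  · ext v
    simp only [normalCone, normalSet, Set.mem_iUnion, Set.mem_Ioi, Set.mem_setOf_eq,
      exists_prop]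
    constructor
    · rintro ⟨r, hr, hv1, hball⟩
      exact ⟨hv1, hmain v hv1 r hr hball⟩
    · rintro ⟨hv1, hball⟩
      exact ⟨A, hApos, hv1, hball⟩
  · refine ⟨nv i₁ x, hunit i₁ x ⟨hxD, hi₁⟩, ?_⟩
    rw [ball_empty_iff _ _ _ _ hApos (hunit i₁ x ⟨hxD, hi₁⟩)]
    intro y hy
    have h1 := hkey i₁ hi₁ y (Set.mem_iInter.1 hy i₁)
    have h2 : A ≤ α i₁ := hAleα i₁
    rcases le_or_gt 0 ⟪y - x, nv i₁ x⟫ with ht | ht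
    · nlinarith [hApos]
    · nlinarith [mul_nonneg (by linarith : (0:ℝ) ≤ α i₁ - A)
        (by linarith : (0:ℝ) ≤ -⟪y - x, nv i₁ x⟫)]
end
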